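/- (Perfect distinguishability case of Eq. (F).) Let W be an n×n complex unitary matrix. If 0 belongs to the convex hull (over ℝ, in ℂ ≅ ℝ²) of the spectrum of W, then there exists a unit vector ψ ∈ ℂⁿ with ⟨ψ, Wψ⟩ = 0. -/
import Mathlib

open Matrix Finset

private lemma unitary_dot {n : ℕ} {W : Matrix (Fin n) (Fin n) ℂ}
    (hW : W ∈ Matrix.unitaryGroup (Fin n) ℂ) (x y : Fin n → ℂ) :
    star (W *ᵥ x) ⬝ᵥ (W *ᵥ y) = star x ⬝ᵥ y := by
  have h1 : Wᴴ * W = 1 := hW.1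
  rw [star_mulVec, dotProduct_mulVec, vecMul_vecMul, h1, vecMul_one]

private lemma unit_eigenvector {n : ℕ} {W : Matrix (Fin n) (Fin n) ℂ}
    {μ : ℂ} (hμ : μ ∈ spectrum ℂ W) :
    ∃ u : Fin n → ℂ, star u ⬝ᵥ u = 1 ∧ W *ᵥ u = μ • u := by
  classical
  have hns : ¬ IsUnit (algebraMap ℂ (Matrix (Fin n) (Fin n) ℂ) μ - W) :=
    spectrum.mem_iff.mp hμ
  have hdet : (μ • (1 : Matrix (Fin n) (Fin n) ℂ) - W).det = 0 := by
    by_contra h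
    exact hns (by
      rw [Algebra.algebraMap_eq_smul_one]
      exact (Matrix.isUnit_iff_isUnit_det _).mpr (isUnit_iff_ne_zero.mpr h))
  obtain ⟨v, hv0, hv⟩ := Matrix.exists_mulVec_eq_zero_iff.mpr hdet
  have heig : W *ᵥ v = μ • v := by
    have := hv
    rw [sub_mulVec, smul_mulVec, one_mulVec, sub_eq_zero] at this
    exact this.symm
  set r : ℝ := ∑ i, Complex.normSq (v i) with hr
  have hre : star v ⬝ᵥ v = (r : ℝ) := by
    simp [dotProduct, Complex.normSq_eq_conj_mul_self, hr]
  have hrne : r ≠ 0 := by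
    intro h
    apply hv0
    have h' : ∀ i ∈ Finset.univ, Complex.normSq (v i) = 0 :=
      (Finset.sum_eq_zero_iff_of_nonneg (fun i _ => Complex.normSq_nonneg _)).mp h
    funext i
    exact Complex.normSq_eq_zero.mp (h' i (Finset.mem_univ i))
  have hrpos : 0 ≤ r := Finset.sum_nonneg fun i _ => Complex.normSq_nonneg _
  set c : ℝ := (Real.sqrt r)⁻¹ with hc
  refine ⟨(c : ℂ) • v, ?_, ?_⟩
  · rw [star_smul, smul_dotProduct, dotProduct_smul, hre]
    simp only [star_trivial, Complex.star_def, Complex.conj_ofReal, smul_eq_mul]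
    rw [← Complex.ofReal_mul, ← Complex.ofReal_mul]
    norm_cast
    rw [hc]
    rw [← mul_assoc, ← mul_inv, Real.mul_self_sqrt hrpos, inv_mul_cancel₀ hrne]
  · rw [mulVec_smul, heig, smul_comm]

private lemma sum_dotProduct' {n : ℕ} {α : Type} (s : Finset α) (f : α → Fin n → ℂ)
    (y : Fin n → ℂ) : (∑ a ∈ s, f a) ⬝ᵥ y = ∑ a ∈ s, f a ⬝ᵥ y := by
  simp only [dotProduct, Finset.sum_apply, Finset.sum_mul]
  exact Finset.sum_comm

private lemma dotProduct_sum' {n : ℕ} {α : Type} (s : Finset α) (x : Fin n → ℂ)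
    (f : α → Fin n → ℂ) : x ⬝ᵥ (∑ a ∈ s, f a) = ∑ a ∈ s, x ⬝ᵥ f a := by
  simp only [dotProduct, Finset.sum_apply, Finset.mul_sum]
  exact Finset.sum_comm

theorem exists_orthogonal_state_of_zero_mem_convexHull_spectrum (n : ℕ)
    (W : Matrix (Fin n) (Fin n) ℂ) (hW : W ∈ Matrix.unitaryGroup (Fin n) ℂ)
    (h0 : (0 : ℂ) ∈ convexHull ℝ (spectrum ℂ W)) :
    ∃ ψ : Fin n → ℂ, star ψ ⬝ᵥ ψ = 1 ∧ star ψ ⬝ᵥ (W *ᵥ ψ) = 0 := by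
  classical
  rw [_root_.convexHull_eq] at h0
  obtain ⟨ι, t, w, z, hw0, hw1, hz, hcm⟩ := h0
  set S : Finset ℂ := t.image z with hS
  set w' : ℂ → ℝ := fun μ => ∑ i ∈ t with z i = μ, w i with hw'
  have hSspec : ∀ μ ∈ S, μ ∈ spectrum ℂ W := by
    intro μ hμ
    obtain ⟨i, hi, rfl⟩ := Finset.mem_image.mp hμ
    exact hz i hi
  have hW'0 : ∀ μ ∈ S, 0 ≤ w' μ := fun μ _ =>
    Finset.sum_nonneg fun i hi => hw0 i (Finset.mem_filter.mp hi).1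
  have hmaps : ∀ i ∈ t, z i ∈ S := fun i hi => Finset.mem_image_of_mem z hi
  have hW'1 : ∑ μ ∈ S, w' μ = 1 := by
    rw [hw']
    rw [Finset.sum_fiberwise_of_maps_to hmaps w]
    exact hw1
  have key : ∑ μ ∈ S, w' μ • μ = 0 := by
    have h1 : ∀ μ ∈ S, w' μ • μ = ∑ i ∈ t with z i = μ, w i • z i := by
      intro μ hμ
      rw [hw']
      rw [Finset.sum_smul]
      exact Finset.sum_congr rfl fun i hi => by rw [(Finset.mem_filter.mp hi).2]
    rw [Finset.sum_congr rfl h1,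
      Finset.sum_fiberwise_of_maps_to hmaps (fun i => w i • z i),
      ← Finset.centerMass_eq_of_sum_1 t z hw1, hcm]
  -- choose unit eigenvectors
  have hchoice : ∀ μ : ℂ, ∃ u : Fin n → ℂ,
      μ ∈ spectrum ℂ W → star u ⬝ᵥ u = 1 ∧ W *ᵥ u = μ • u := by
    intro μ
    by_cases h : μ ∈ spectrum ℂ W
    · obtain ⟨u, h1, h2⟩ := unit_eigenvector h
      exact ⟨u, fun _ => ⟨h1, h2⟩⟩
    · exact ⟨0, fun h' => absurd h' h⟩
  choose u hu using hchoice
  have hu1 : ∀ μ ∈ S, star (u μ) ⬝ᵥ u μ = 1 := fun μ hμ => (hu μ (hSspec μ hμ)).1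
  have hu2 : ∀ μ ∈ S, W *ᵥ u μ = μ • u μ := fun μ hμ => (hu μ (hSspec μ hμ)).2
  -- orthonormality
  have horth : ∀ μ ∈ S, ∀ ν ∈ S, star (u μ) ⬝ᵥ u ν = if μ = ν then 1 else 0 := by
    intro μ hμ ν hν
    by_cases h : μ = ν
    · subst h; simp [hu1 μ hμ]
    · rw [if_neg h]
      have hd : star (u μ) ⬝ᵥ u ν = (starRingEnd ℂ) μ * ν * (star (u μ) ⬝ᵥ u ν) := by
        conv_lhs => rw [← unitary_dot hW (u μ) (u ν), hu2 μ hμ, hu2 ν hν]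
        rw [star_smul, smul_dotProduct, dotProduct_smul]
        simp only [smul_eq_mul, Complex.star_def]
        ring
      have hmod : (starRingEnd ℂ) μ * μ = 1 := by
        have := unitary_dot hW (u μ) (u μ)
        rw [hu2 μ hμ, star_smul, smul_dotProduct, dotProduct_smul, hu1 μ hμ] at this
        simpa [Complex.star_def] using this
      by_contra hd0
      have h1 : (starRingEnd ℂ) μ * ν = 1 := by
        have h2 : (starRingEnd ℂ) μ * ν * (star (u μ) ⬝ᵥ u ν)
            = 1 * (star (u μ) ⬝ᵥ u ν) := by rw [one_mul]; exact hd.symm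
        rcases mul_eq_mul_right_iff.mp h2 with h' | h'
        · exact h'
        · exact absurd h' hd0
      have : μ = ν := by
        have hμne : (starRingEnd ℂ) μ ≠ 0 := by
          intro h'
          rw [h', zero_mul] at hmod
          exact zero_ne_one hmod
        have := h1.trans hmod.symm
        exact (mul_left_cancel₀ hμne this).symm
      exact h this
  -- define ψ
  set ψ : Fin n → ℂ := ∑ μ ∈ S, ((Real.sqrt (w' μ) : ℂ)) • u μ with hψ
  have hstarψ : star ψ = ∑ μ ∈ S, ((Real.sqrt (w' μ) : ℂ)) • star (u μ) := by
    rw [hψ, star_sum]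
    exact Finset.sum_congr rfl fun μ _ => by
      rw [star_smul, Complex.star_def, Complex.conj_ofReal]
  have hsq : ∀ μ ∈ S, (Real.sqrt (w' μ) : ℂ) * (Real.sqrt (w' μ) : ℂ) = (w' μ : ℂ) := by
    intro μ hμ
    rw [← Complex.ofReal_mul, Real.mul_self_sqrt (hW'0 μ hμ)]
  have expand : ∀ y : ℂ → Fin n → ℂ,
      star ψ ⬝ᵥ (∑ ν ∈ S, y ν) = ∑ μ ∈ S, ∑ ν ∈ S, ((Real.sqrt (w' μ) : ℂ)) • (star (u μ) ⬝ᵥ y ν) := by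
    intro y
    rw [hstarψ, sum_dotProduct']
    refine Finset.sum_congr rfl fun μ _ => ?_
    rw [smul_dotProduct, dotProduct_sum', Finset.smul_sum]
  refine ⟨ψ, ?_, ?_⟩
  · rw [hψ]
    rw [expand]
    have hinner : ∀ μ ∈ S, ∑ ν ∈ S, ((Real.sqrt (w' μ) : ℂ)) •
        (star (u μ) ⬝ᵥ ((Real.sqrt (w' ν) : ℂ) • u ν)) = (w' μ : ℂ) := by
      intro μ hμ
      rw [Finset.sum_congr rfl fun ν hν => by
        rw [dotProduct_smul, horth μ hμ ν hν]]
      simp only [smul_eq_mul, mul_ite, mul_one, mul_zero]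
      rw [Finset.sum_ite_eq S μ (fun ν => (Real.sqrt (w' μ) : ℂ) * (Real.sqrt (w' ν) : ℂ)),
        if_pos hμ]
      exact hsq μ hμ
    rw [Finset.sum_congr rfl hinner, ← Complex.ofReal_sum, hW'1, Complex.ofReal_one]
  · have hWψ : W *ᵥ ψ = ∑ ν ∈ S, ((Real.sqrt (w' ν) : ℂ) * ν) • u ν := by
      have h := map_sum W.mulVecLin (fun μ => ((Real.sqrt (w' μ) : ℂ)) • u μ) S
      simp only [mulVecLin_apply] at h
      rw [hψ, h]
      refine Finset.sum_congr rfl fun ν hν => ?_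
      rw [mulVec_smul, hu2 ν hν, smul_smul]
    rw [hWψ, expand]
    have hinner : ∀ μ ∈ S, ∑ ν ∈ S, ((Real.sqrt (w' μ) : ℂ)) •
        (star (u μ) ⬝ᵥ (((Real.sqrt (w' ν) : ℂ) * ν) • u ν)) = (w' μ : ℂ) * μ := by
      intro μ hμ
      rw [Finset.sum_congr rfl fun ν hν => by
        rw [dotProduct_smul, horth μ hμ ν hν]]
      simp only [smul_eq_mul, mul_ite, mul_one, mul_zero]
      rw [Finset.sum_ite_eq S μ
        (fun ν => (Real.sqrt (w' μ) : ℂ) * ((Real.sqrt (w' ν) : ℂ) * ν)), if_pos hμ]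
      rw [← mul_assoc, hsq μ hμ]
    rw [Finset.sum_congr rfl hinner]
    rw [Finset.sum_congr rfl fun μ _ => Complex.real_smul.symm]
    exact key
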